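/- Let M be a matroid on a finite ground set E with rank function rk, let 𝒫 be the lattice of flats of M ordered by inclusion, and let μ denote the Möbius function of 𝒫. Then for all flats P ⊆ Q of M, one has (−1)^{rk(Q) − rk(P)} μ(P, Q) ≥ 0. -/

import Mathlib

open Classical

noncomputable section

/-- The rank of a subset `A` in a matroid `M`: the size of a maximal independent
subset of `A`. -/
def Matroid.mrank {α : Type*} (M : Matroid α) (A : Set α) : ℕ :=
  sSup (Set.ncard '' {I : Set α | M.Indep I ∧ I ⊆ A})

namespace MobiusAux

open Set Finset

variable {α : Type*} [Fintype α] {M : Matroid α}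

lemma flat_closure (M : Matroid α) (X : Set α) : M.IsFlat (M.closure X) := by
  rw [Matroid.closure_def]
  have hne : {F | M.IsFlat F ∧ X ∩ M.E ⊆ F}.Nonempty := ⟨M.E, M.ground_isFlat, inter_subset_right⟩
  rw [sInter_eq_iInter]
  have := hne.to_subtype
  exact Matroid.IsFlat.iInter (fun F => F.2.1)

lemma mrank_eq_of_basis {I X : Set α} (hI : M.IsBasis I X) : M.mrank X = I.ncard := by
  refine IsGreatest.csSup_eq ⟨⟨I, ⟨hI.indep, hI.subset⟩, rfl⟩, ?_⟩
  rintro n ⟨J, ⟨hJ, hJX⟩, rfl⟩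
  obtain ⟨K, hK, hJK⟩ := hJ.subset_isBasis_of_subset hJX hI.subset_ground
  have h1 : J.ncard ≤ K.ncard := Set.ncard_le_ncard hJK (Set.toFinite K)
  have h2 : K.ncard = I.ncard := by
    have := hK.encard_eq_encard hI
    rw [Set.ncard_def, Set.ncard_def, this]
  omega

lemma indep_ncard_le_mrank {I A : Set α} (hI : M.Indep I) (hIA : I ⊆ A) :
    I.ncard ≤ M.mrank A := by
  have hbdd : BddAbove (Set.ncard '' {I : Set α | M.Indep I ∧ I ⊆ A}) := by
    refine ⟨Fintype.card α, ?_⟩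
    rintro n ⟨J, _, rfl⟩
    have := Set.ncard_le_ncard (Set.subset_univ J) (Set.toFinite _)
    simpa [Set.ncard_univ, Nat.card_eq_fintype_card] using this
  exact le_csSup hbdd ⟨I, ⟨hI, hIA⟩, rfl⟩

lemma mrank_mono {X Y : Set α} (hXY : X ⊆ Y) (hX : X ⊆ M.E) : M.mrank X ≤ M.mrank Y := by
  obtain ⟨I, hI⟩ := M.exists_isBasis X hX
  rw [mrank_eq_of_basis hI]
  exact indep_ncard_le_mrank hI.indep (hI.subset.trans hXY)

lemma mrank_closure (X : Set α) (hX : X ⊆ M.E) : M.mrank (M.closure X) = M.mrank X := by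
  obtain ⟨I, hI⟩ := M.exists_isBasis X hX
  rw [mrank_eq_of_basis hI.isBasis_closure_right, mrank_eq_of_basis hI]

lemma mrank_insert_le (a : α) (X : Set α) (haE : a ∈ M.E) (hX : X ⊆ M.E) :
    M.mrank (insert a X) ≤ M.mrank X + 1 := by
  have hins : insert a X ⊆ M.E := insert_subset haE hX
  obtain ⟨J, hJ⟩ := M.exists_isBasis (insert a X) hins
  rw [mrank_eq_of_basis hJ]
  have hdiff : M.Indep (J \ {a}) := hJ.indep.subset diff_subset
  have hdiffX : J \ {a} ⊆ X := by
    intro x hx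
    rcases hJ.subset hx.1 with h | h
    · exact absurd h hx.2
    · exact h
  have h1 : (J \ {a}).ncard ≤ M.mrank X := indep_ncard_le_mrank hdiff hdiffX
  by_cases haJ : a ∈ J
  · have := Set.ncard_diff_singleton_add_one haJ (Set.toFinite J)
    omega
  · rw [Set.diff_singleton_eq_self haJ] at h1
    omega

lemma mrank_lt_of_flat_ssubset {P Q : Set α} (hP : M.IsFlat P) (hQ : M.IsFlat Q) (h : P ⊂ Q) :
    M.mrank P < M.mrank Q := by
  obtain ⟨a, haQ, haP⟩ := Set.exists_of_ssubset h
  obtain ⟨I, hI⟩ := M.exists_isBasis P hP.subset_ground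
  have haE : a ∈ M.E := hQ.subset_ground haQ
  have hclI : M.closure I = P := by rw [hI.closure_eq_closure, hP.closure]
  have haI : a ∉ I := fun hc => haP (hI.subset hc)
  have hind : M.Indep (insert a I) := by
    rw [hI.indep.insert_indep_iff_of_notMem haI]
    exact ⟨haE, by rw [hclI]; exact haP⟩
  have hsub : insert a I ⊆ Q := insert_subset haQ (hI.subset.trans h.subset)
  have h1 : (insert a I).ncard ≤ M.mrank Q := indep_ncard_le_mrank hind hsub
  rw [Set.ncard_insert_of_notMem haI (Set.toFinite I)] at h1
  rw [mrank_eq_of_basis hI]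
  omega

variable (μ : Finset α → Finset α → ℤ)

/-- Weisner-type vanishing: for a flat `P`, element `a ∉ P` of the ground set, and any
flat `Y ⊇ P` containing `a`, the sum of `μ P Z` over flats `Z` in `[P, Y]` whose join
with `a` is `Y` vanishes. -/
lemma weisner
    (hsum : ∀ P Q : Finset α, M.IsFlat ↑P → M.IsFlat ↑Q → P ⊂ Q →
      ∑ Z ∈ Finset.univ.filter (fun Z : Finset α => M.IsFlat ↑Z ∧ P ⊆ Z ∧ Z ⊆ Q),
        μ P Z = 0)
    (P : Finset α) (hP : M.IsFlat ↑P) {a : α} (haE : a ∈ M.E) (haP : a ∉ P) :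
    ∀ (n : ℕ) (Y : Finset α), Y.card = n → M.IsFlat ↑Y → P ⊆ Y → a ∈ Y →
      ∑ Z ∈ Finset.univ.filter (fun Z : Finset α =>
          M.IsFlat ↑Z ∧ P ⊆ Z ∧ Z ⊆ Y ∧ (M.closure (↑Z ∪ {a})).toFinset = Y), μ P Z = 0 := by
  intro n
  induction n using Nat.strong_induction_on with
  | _ n IH =>
  intro Y hcard hY hPY haY
  have hPsub : P ⊂ Y := ⟨hPY, fun h => haP (h haY)⟩
  have h0 := hsum P Y hP hY hPsub
  set f : Finset α → Finset α := fun Z => (M.closure (↑Z ∪ {a})).toFinset with hf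
  have hZsubf : ∀ Z : Finset α, M.IsFlat ↑Z → Z ⊆ f Z := by
    intro Z hZf x hx
    have hZE : (↑Z ∪ {a} : Set α) ⊆ M.E := Set.union_subset hZf.subset_ground (by simpa using haE)
    rw [Set.mem_toFinset]
    exact M.subset_closure _ hZE (Set.mem_union_left _ (by simpa using hx))
  have hainf : ∀ Z : Finset α, M.IsFlat ↑Z → a ∈ f Z := by
    intro Z hZf
    have hZE : (↑Z ∪ {a} : Set α) ⊆ M.E := Set.union_subset hZf.subset_ground (by simpa using haE)
    rw [Set.mem_toFinset]
    exact M.subset_closure _ hZE (Set.mem_union_right _ rfl)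
  have hfsubY : ∀ Z : Finset α, Z ⊆ Y → f Z ⊆ Y := by
    intro Z hZY x hx
    rw [Set.mem_toFinset] at hx
    have hsub : (↑Z ∪ {a} : Set α) ⊆ ↑Y := by
      refine Set.union_subset ?_ (by simpa using haY)
      intro y hy
      exact_mod_cast hZY (by exact_mod_cast hy)
    have : M.closure (↑Z ∪ {a}) ⊆ ↑Y := by
      calc M.closure (↑Z ∪ {a}) ⊆ M.closure ↑Y := M.closure_subset_closure hsub
      _ = ↑Y := hY.closure
    exact_mod_cast this hx
  have hmaps : ∀ Z ∈ Finset.univ.filter (fun Z : Finset α => M.IsFlat ↑Z ∧ P ⊆ Z ∧ Z ⊆ Y),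
      f Z ∈ Finset.univ.filter (fun W : Finset α => M.IsFlat ↑W ∧ P ⊆ W ∧ W ⊆ Y ∧ a ∈ W) := by
    intro Z hZ
    simp only [Finset.mem_filter, Finset.mem_univ, true_and] at hZ ⊢
    obtain ⟨hZf, hPZ, hZY⟩ := hZ
    refine ⟨?_, hPZ.trans (hZsubf Z hZf), hfsubY Z hZY, hainf Z hZf⟩
    show M.IsFlat ↑((M.closure (↑Z ∪ {a})).toFinset)
    rw [Set.coe_toFinset]
    exact flat_closure M _
  rw [← Finset.sum_fiberwise_of_maps_to hmaps (μ P)] at h0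
  have hYT : Y ∈ Finset.univ.filter
      (fun W : Finset α => M.IsFlat ↑W ∧ P ⊆ W ∧ W ⊆ Y ∧ a ∈ W) := by
    simp [hY, hPY, haY]
  rw [← Finset.add_sum_erase _ _ hYT] at h0
  have hrest : ∀ W ∈ (Finset.univ.filter
      (fun W : Finset α => M.IsFlat ↑W ∧ P ⊆ W ∧ W ⊆ Y ∧ a ∈ W)).erase Y,
      (∑ Z ∈ (Finset.univ.filter (fun Z : Finset α => M.IsFlat ↑Z ∧ P ⊆ Z ∧ Z ⊆ Y)).filter
        (fun Z => f Z = W), μ P Z) = 0 := by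
    intro W hW
    obtain ⟨hWY, hWT⟩ := Finset.mem_erase.mp hW
    simp only [Finset.mem_filter, Finset.mem_univ, true_and] at hWT
    obtain ⟨hWf, hPW, hWsubY, haW⟩ := hWT
    have hlt : W.card < n := by
      rw [← hcard]
      exact Finset.card_lt_card ⟨hWsubY, fun h => hWY (Finset.Subset.antisymm hWsubY h)⟩
    have hIH := IH W.card hlt W rfl hWf hPW haW
    rw [← hIH]
    apply Finset.sum_congr _ (fun _ _ => rfl)
    ext Z
    simp only [Finset.mem_filter, Finset.mem_univ, true_and]
    constructor
    · rintro ⟨⟨h1, h2, h3⟩, h4⟩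
      refine ⟨h1, h2, ?_, h4⟩
      intro x hx
      rw [← h4]
      exact hZsubf Z h1 hx
    · rintro ⟨h1, h2, h3, h4⟩
      exact ⟨⟨h1, h2, h3.trans hWsubY⟩, h4⟩
  rw [Finset.sum_eq_zero hrest, add_zero] at h0
  rw [← h0]
  apply Finset.sum_congr _ (fun _ _ => rfl)
  rw [Finset.filter_filter]
  apply Finset.filter_congr
  intro Z _
  have hfz : f Z = (M.closure (↑Z ∪ {a})).toFinset := rfl
  rw [hfz]
  tauto

theorem flat_ssubset_step {Z Q : Finset α} {a : α} (hZ : M.IsFlat ↑Z) (hQ : M.IsFlat ↑Q)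
    (haE : a ∈ M.E) (hZQ : Z ⊆ Q) (hne : Z ≠ Q)
    (hcl : M.closure (↑Z ∪ {a}) = ↑Q) : M.mrank ↑Q = M.mrank ↑Z + 1 := by
  have hss : (↑Z : Set α) ⊂ ↑Q := by
    refine ⟨by exact_mod_cast hZQ, fun h => hne ?_⟩
    exact_mod_cast Finset.Subset.antisymm hZQ (by exact_mod_cast h)
  have h1 : M.mrank ↑Z < M.mrank ↑Q := mrank_lt_of_flat_ssubset hZ hQ hss
  have hZE : (↑Z : Set α) ⊆ M.E := hZ.subset_ground
  have h2 : M.mrank ↑Q ≤ M.mrank ↑Z + 1 := by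
    rw [← hcl, Set.union_singleton, mrank_closure _ (insert_subset haE hZE)]
    exact mrank_insert_le a _ haE hZE
  omega

end MobiusAux

/-- For a matroid `M` on a finite ground set, the Möbius function `μ` of the
lattice of flats (characterized by `μ P P = 1` and `Σ_{P ⊆ Z ⊆ Q, Z flat} μ P Z = 0`
for flats `P ⊊ Q`) satisfies `(−1)^{rk(Q) − rk(P)} μ(P, Q) ≥ 0` for all flats
`P ⊆ Q`. -/
theorem flats_mobius_sign {α : Type*} [Fintype α] (M : Matroid α)
    (μ : Finset α → Finset α → ℤ)
    (hrefl : ∀ P : Finset α, M.IsFlat ↑P → μ P P = 1)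
    (hsum : ∀ P Q : Finset α, M.IsFlat ↑P → M.IsFlat ↑Q → P ⊂ Q →
      ∑ Z ∈ Finset.univ.filter (fun Z : Finset α => M.IsFlat ↑Z ∧ P ⊆ Z ∧ Z ⊆ Q),
        μ P Z = 0)
    (P Q : Finset α) (hP : M.IsFlat ↑P) (hQ : M.IsFlat ↑Q) (hPQ : P ⊆ Q) :
    0 ≤ (-1) ^ (M.mrank ↑Q - M.mrank ↑P) * μ P Q := by
  classical
  suffices H : ∀ (n : ℕ) (Q : Finset α), Q.card = n → M.IsFlat ↑Q → P ⊆ Q →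
      0 ≤ (-1) ^ (M.mrank ↑Q - M.mrank ↑P) * μ P Q by
    exact H Q.card Q rfl hQ hPQ
  intro n
  induction n using Nat.strong_induction_on with
  | _ n IH =>
  intro Q hcard hQ hPQ
  by_cases hPQeq : P = Q
  · subst hPQeq
    rw [hrefl P hP, Nat.sub_self, pow_zero]
    norm_num
  · obtain ⟨a, haQ, haP⟩ := Finset.exists_of_ssubset ⟨hPQ, fun h => hPQeq (Finset.Subset.antisymm hPQ h)⟩
    have haE : a ∈ M.E := hQ.subset_ground (by exact_mod_cast haQ)
    have hW := MobiusAux.weisner μ hsum P hP haE haP Q.card Q rfl hQ hPQ haQ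
    set F := Finset.univ.filter (fun Z : Finset α =>
        M.IsFlat ↑Z ∧ P ⊆ Z ∧ Z ⊆ Q ∧ (M.closure (↑Z ∪ {a})).toFinset = Q) with hF
    have hQF : Q ∈ F := by
      simp only [hF, Finset.mem_filter, Finset.mem_univ, true_and]
      refine ⟨hQ, hPQ, Finset.Subset.rfl, ?_⟩
      have : (↑Q ∪ {a} : Set α) = ↑Q := Set.union_eq_self_of_subset_right (by simpa using haQ)
      rw [this, hQ.closure, Finset.toFinset_coe]
    have hμQ : μ P Q = -∑ Z ∈ F.erase Q, μ P Z := by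
      have := Finset.add_sum_erase F (μ P) hQF
      rw [hW] at this
      linarith
    have hkey : (-1 : ℤ) ^ (M.mrank ↑Q - M.mrank ↑P) * μ P Q
        = ∑ Z ∈ F.erase Q, (-1) ^ (M.mrank ↑Z - M.mrank ↑P) * μ P Z := by
      rw [hμQ, mul_neg, Finset.mul_sum, ← Finset.sum_neg_distrib]
      apply Finset.sum_congr rfl
      intro Z hZmem
      obtain ⟨hZQ, hZF⟩ := Finset.mem_erase.mp hZmem
      simp only [hF, Finset.mem_filter, Finset.mem_univ, true_and] at hZF
      obtain ⟨hZf, hPZ, hZsubQ, hZcl⟩ := hZF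
      have hcl : M.closure (↑Z ∪ {a}) = ↑Q := by
        rw [← hZcl, Set.coe_toFinset]
      have hstep := MobiusAux.flat_ssubset_step hZf hQ haE hZsubQ hZQ hcl
      have hPZrank : M.mrank ↑P ≤ M.mrank ↑Z :=
        MobiusAux.mrank_mono (by exact_mod_cast hPZ) hP.subset_ground
      have hd : M.mrank ↑Q - M.mrank ↑P = (M.mrank ↑Z - M.mrank ↑P) + 1 := by omega
      rw [hd, pow_succ]
      ring
    rw [hkey]
    apply Finset.sum_nonneg
    intro Z hZmem
    obtain ⟨hZQ, hZF⟩ := Finset.mem_erase.mp hZmem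
    simp only [hF, Finset.mem_filter, Finset.mem_univ, true_and] at hZF
    obtain ⟨hZf, hPZ, hZsubQ, _⟩ := hZF
    have hlt : Z.card < n := by
      rw [← hcard]
      exact Finset.card_lt_card ⟨hZsubQ, fun h => hZQ (Finset.Subset.antisymm hZsubQ h)⟩
    exact IH Z.card hlt Z rfl hZf hPZ

end
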